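/- Let T ≥ 2, let f = (f_1, …, f_T) be a real vector with f_T ≠ 0 and f_t ≠ 0 for all t, and let σ_1², …, σ_T² > 0. Define φ_t = Σ_{τ=t}^{T} (f_τ/σ_τ)² for t = 1, …, T. Define the (T−1)×T matrix Π = (π_{ts}) by π_{tt} = (√(φ_{t+1}/φ_t))/σ_t, π_{ts} = −f_t f_s (√(φ_{t+1}/φ_t)) / (φ_{t+1} σ_t σ_s²) for s > t, and π_{ts} = 0 for s < t. Then Π f = 0 and Π Σ_σ Π' = I_{T−1}, where Σ_σ = diag(σ_1², …, σ_T²). -/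

import Mathlib

open Finset Matrix

set_option maxHeartbeats 1000000

private lemma helmert_diag_aux (r p q s g F : ℝ) (hp : p ≠ 0) (hq : q ≠ 0) (hs : s ≠ 0)
    (hr2 : r ^ 2 = q / p) (hrec : p = g + q) (hg : g = (F / s) ^ 2) :
    r / s * s ^ 2 * (r / s) + F ^ 2 * r ^ 2 / (q ^ 2 * s ^ 2) * q = 1 := by
  have e1 : r / s * s ^ 2 * (r / s) = r ^ 2 := by field_simp
  have hps : p * s ^ 2 = F ^ 2 + q * s ^ 2 := by
    rw [hrec, hg]; field_simp
  rw [e1, hr2]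
  field_simp
  linear_combination (-1 : ℝ) * hps

private lemma helmert_off_aux (Ft Fu rt ru pt pu st su : ℝ)
    (hpt : pt ≠ 0) (hpu : pu ≠ 0) (hst : st ≠ 0) (hsu : su ≠ 0) :
    -Ft * Fu * rt / (pt * st * su ^ 2) * su ^ 2 * (ru / su) +
      Ft * Fu * rt * ru / (pt * pu * st * su) * pu = 0 := by
  field_simp
  ring

private lemma helmert_term_aux (Ft Fs r p st ss : ℝ) (hp : p ≠ 0) (hst : st ≠ 0) (hss : ss ≠ 0) :
    -Ft * Fs * r / (p * st * ss ^ 2) * ss ^ 2 * (-Ft * Fs * r / (p * st * ss ^ 2)) =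
      Ft ^ 2 * r ^ 2 / (p ^ 2 * st ^ 2) * (Fs / ss) ^ 2 := by
  field_simp

private lemma helmert_term_off_aux (Ft Fu Fs rt ru pt pu st su ss : ℝ)
    (hpt : pt ≠ 0) (hpu : pu ≠ 0) (hst : st ≠ 0) (hsu : su ≠ 0) (hss : ss ≠ 0) :
    -Ft * Fs * rt / (pt * st * ss ^ 2) * ss ^ 2 * (-Fu * Fs * ru / (pu * su * ss ^ 2)) =
      Ft * Fu * rt * ru / (pt * pu * st * su) * (Fs / ss) ^ 2 := by
  field_simp

private lemma helmert_row_aux (F r p s : ℝ) (hp : p ≠ 0) (hs : s ≠ 0) :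
    r / s * F + -F * r / (p * s) * p = 0 := by
  field_simp
  ring

private lemma helmert_row_term_aux (Ft Fs r p st ss : ℝ) (hp : p ≠ 0) (hst : st ≠ 0)
    (hss : ss ≠ 0) :
    -Ft * Fs * r / (p * st * ss ^ 2) * Fs = -Ft * r / (p * st) * (Fs / ss) ^ 2 := by
  field_simp

/-- Generalized Helmert transformation (Kuersteiner–Prucha, Proposition B.1).
Indices are 0-based: rows `t = 0, …, T-2` correspond to the paper's `t = 1, …, T-1`. -/
theorem generalized_helmert
    (T : ℕ) (hT : 2 ≤ T) (f σ : ℕ → ℝ)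
    (hf : ∀ t, t < T → f t ≠ 0) (hσ : ∀ t, t < T → 0 < σ t)
    (φ : ℕ → ℝ) (hφ : ∀ t, φ t = ∑ τ ∈ Finset.Ico t T, (f τ / σ τ) ^ 2)
    (Pmat : Matrix (Fin (T - 1)) (Fin T) ℝ)
    (hPmat : ∀ (t : Fin (T - 1)) (s : Fin T),
      Pmat t s =
        if (s : ℕ) < (t : ℕ) then 0
        else if (s : ℕ) = (t : ℕ) then Real.sqrt (φ ((t : ℕ) + 1) / φ (t : ℕ)) / σ (t : ℕ)
        else -(f (t : ℕ)) * f (s : ℕ) * Real.sqrt (φ ((t : ℕ) + 1) / φ (t : ℕ)) /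
          (φ ((t : ℕ) + 1) * σ (t : ℕ) * (σ (s : ℕ)) ^ 2)) :
    Pmat.mulVec (fun s : Fin T => f (s : ℕ)) = 0 ∧
      Pmat * Matrix.diagonal (fun s : Fin T => (σ (s : ℕ)) ^ 2) * Pmat.transpose = 1 := by
  have hσne : ∀ t, t < T → σ t ≠ 0 := fun t ht => (hσ t ht).ne'
  have hgpos : ∀ t, t < T → 0 < (f t / σ t) ^ 2 := by
    intro t ht
    exact lt_of_le_of_ne (sq_nonneg _)
      (Ne.symm (pow_ne_zero 2 (div_ne_zero (hf t ht) (hσne t ht))))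
  have hφpos : ∀ t, t < T → 0 < φ t := by
    intro t ht
    rw [hφ]
    refine Finset.sum_pos' (fun i _ => sq_nonneg _) ⟨T - 1, ?_, ?_⟩
    · exact Finset.mem_Ico.mpr ⟨by omega, by omega⟩
    · exact hgpos (T - 1) (by omega)
  have hφrec : ∀ t, t < T → φ t = (f t / σ t) ^ 2 + φ (t + 1) := by
    intro t ht
    rw [hφ, hφ, Finset.sum_eq_sum_Ico_succ_bot ht]
  have hφtail : ∀ a, ∑ s ∈ Finset.Ico a T, (f s / σ s) ^ 2 = φ a := fun a => (hφ a).symm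
  -- key lemma: entry of Π Σ Πᵀ for t ≤ u
  have key : ∀ t u : Fin (T - 1), (t : ℕ) ≤ (u : ℕ) →
      ∑ s : Fin T, Pmat t s * (σ (s : ℕ)) ^ 2 * Pmat u s = if t = u then 1 else 0 := by
    intro t u htu
    have htT : (t : ℕ) < T := by have := t.isLt; omega
    have ht1T : (t : ℕ) + 1 ≤ T := by have := t.isLt; omega
    have huT : (u : ℕ) < T := by have := u.isLt; omega
    have hu1T : (u : ℕ) + 1 ≤ T := by have := u.isLt; omega
    have hφt : 0 < φ (t : ℕ) := hφpos _ htT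
    have hφt' : 0 < φ ((t : ℕ) + 1) := by
      apply hφpos; have := t.isLt; omega
    have hφu : 0 < φ (u : ℕ) := hφpos _ huT
    have hφu' : 0 < φ ((u : ℕ) + 1) := by
      apply hφpos; have := u.isLt; omega
    simp only [hPmat]
    rw [Fin.sum_univ_eq_sum_range (fun s =>
      (if s < (t : ℕ) then 0
        else if s = (t : ℕ) then Real.sqrt (φ ((t : ℕ) + 1) / φ (t : ℕ)) / σ (t : ℕ)
        else -(f (t : ℕ)) * f s * Real.sqrt (φ ((t : ℕ) + 1) / φ (t : ℕ)) /
          (φ ((t : ℕ) + 1) * σ (t : ℕ) * (σ s) ^ 2)) * (σ s) ^ 2 *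
      (if s < (u : ℕ) then 0
        else if s = (u : ℕ) then Real.sqrt (φ ((u : ℕ) + 1) / φ (u : ℕ)) / σ (u : ℕ)
        else -(f (u : ℕ)) * f s * Real.sqrt (φ ((u : ℕ) + 1) / φ (u : ℕ)) /
          (φ ((u : ℕ) + 1) * σ (u : ℕ) * (σ s) ^ 2))) T]
    rw [Finset.range_eq_Ico, ← Finset.sum_Ico_consecutive _ (Nat.zero_le (u : ℕ)) huT.le,
      Finset.sum_eq_sum_Ico_succ_bot huT]
    have hzero : ∑ s ∈ Finset.Ico 0 (u : ℕ),
        (if s < (t : ℕ) then 0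
          else if s = (t : ℕ) then Real.sqrt (φ ((t : ℕ) + 1) / φ (t : ℕ)) / σ (t : ℕ)
          else -(f (t : ℕ)) * f s * Real.sqrt (φ ((t : ℕ) + 1) / φ (t : ℕ)) /
            (φ ((t : ℕ) + 1) * σ (t : ℕ) * (σ s) ^ 2)) * (σ s) ^ 2 *
        (if s < (u : ℕ) then 0
          else if s = (u : ℕ) then Real.sqrt (φ ((u : ℕ) + 1) / φ (u : ℕ)) / σ (u : ℕ)
          else -(f (u : ℕ)) * f s * Real.sqrt (φ ((u : ℕ) + 1) / φ (u : ℕ)) /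
            (φ ((u : ℕ) + 1) * σ (u : ℕ) * (σ s) ^ 2)) = 0 := by
      refine Finset.sum_eq_zero fun s hs => ?_
      have hs' : s < (u : ℕ) := (Finset.mem_Ico.mp hs).2
      rw [if_pos hs', mul_zero]
    rw [hzero, zero_add]
    rcases eq_or_lt_of_le htu with heq | hlt
    · -- diagonal case
      have : t = u := Fin.ext heq
      subst this
      set r := Real.sqrt (φ ((t : ℕ) + 1) / φ (t : ℕ)) with hr
      have hr2 : r ^ 2 = φ ((t : ℕ) + 1) / φ (t : ℕ) :=
        Real.sq_sqrt (le_of_lt (div_pos hφt' hφt))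
      have htail : ∑ s ∈ Finset.Ico ((t : ℕ) + 1) T,
          (if s < (t : ℕ) then 0
            else if s = (t : ℕ) then r / σ (t : ℕ)
            else -(f (t : ℕ)) * f s * r / (φ ((t : ℕ) + 1) * σ (t : ℕ) * (σ s) ^ 2)) * (σ s) ^ 2 *
          (if s < (t : ℕ) then 0
            else if s = (t : ℕ) then r / σ (t : ℕ)
            else -(f (t : ℕ)) * f s * r / (φ ((t : ℕ) + 1) * σ (t : ℕ) * (σ s) ^ 2)) =
          (f (t : ℕ)) ^ 2 * r ^ 2 / (φ ((t : ℕ) + 1) ^ 2 * (σ (t : ℕ)) ^ 2) * φ ((t : ℕ) + 1) := by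
        rw [show ∀ c : ℝ, c * φ ((t : ℕ) + 1) =
            ∑ s ∈ Finset.Ico ((t : ℕ) + 1) T, c * (f s / σ s) ^ 2 from
          fun c => by rw [← Finset.mul_sum, hφtail]]
        refine Finset.sum_congr rfl fun s hs => ?_
        have h1 : (t : ℕ) + 1 ≤ s := (Finset.mem_Ico.mp hs).1
        have h2 : s < T := (Finset.mem_Ico.mp hs).2
        rw [if_neg (by omega), if_neg (by omega)]
        exact helmert_term_aux _ _ _ _ _ _ hφt'.ne' (hσne (t : ℕ) htT) (hσne s h2)
      rw [htail, if_neg (by omega : ¬((t : ℕ) < (t : ℕ))), if_pos rfl, if_pos rfl]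
      have hσt := hσne (t : ℕ) htT
      have hφteq := hφrec (t : ℕ) htT
      have key2 : r / σ (t : ℕ) * (σ (t : ℕ)) ^ 2 * (r / σ (t : ℕ)) +
          (f (t : ℕ)) ^ 2 * r ^ 2 / (φ ((t : ℕ) + 1) ^ 2 * (σ (t : ℕ)) ^ 2) * φ ((t : ℕ) + 1)
          = 1 :=
        helmert_diag_aux r (φ (t : ℕ)) (φ ((t : ℕ) + 1)) (σ (t : ℕ))
          ((f (t : ℕ) / σ (t : ℕ)) ^ 2) (f (t : ℕ)) hφt.ne' hφt'.ne' hσt hr2 hφteq rfl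
      rw [key2]
    · -- off-diagonal case
      have hne : t ≠ u := fun h => by rw [h] at hlt; omega
      rw [if_neg hne]
      set rt := Real.sqrt (φ ((t : ℕ) + 1) / φ (t : ℕ)) with hrt
      set ru := Real.sqrt (φ ((u : ℕ) + 1) / φ (u : ℕ)) with hru
      have htail : ∑ s ∈ Finset.Ico ((u : ℕ) + 1) T,
          (if s < (t : ℕ) then 0
            else if s = (t : ℕ) then rt / σ (t : ℕ)
            else -(f (t : ℕ)) * f s * rt / (φ ((t : ℕ) + 1) * σ (t : ℕ) * (σ s) ^ 2)) * (σ s) ^ 2 *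
          (if s < (u : ℕ) then 0
            else if s = (u : ℕ) then ru / σ (u : ℕ)
            else -(f (u : ℕ)) * f s * ru / (φ ((u : ℕ) + 1) * σ (u : ℕ) * (σ s) ^ 2)) =
          f (t : ℕ) * f (u : ℕ) * rt * ru /
            (φ ((t : ℕ) + 1) * φ ((u : ℕ) + 1) * σ (t : ℕ) * σ (u : ℕ)) * φ ((u : ℕ) + 1) := by
        rw [show ∀ c : ℝ, c * φ ((u : ℕ) + 1) =
            ∑ s ∈ Finset.Ico ((u : ℕ) + 1) T, c * (f s / σ s) ^ 2 from
          fun c => by rw [← Finset.mul_sum, hφtail]]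
        refine Finset.sum_congr rfl fun s hs => ?_
        have h1 : (u : ℕ) + 1 ≤ s := (Finset.mem_Ico.mp hs).1
        have h2 : s < T := (Finset.mem_Ico.mp hs).2
        rw [if_neg (by omega), if_neg (by omega), if_neg (by omega), if_neg (by omega)]
        exact helmert_term_off_aux _ _ _ _ _ _ _ _ _ _ hφt'.ne' hφu'.ne'
          (hσne (t : ℕ) htT) (hσne (u : ℕ) huT) (hσne s h2)
      rw [htail, if_neg (by omega : ¬((u : ℕ) < (t : ℕ))), if_neg (by omega : ¬((u : ℕ) = (t : ℕ))),
        if_neg (by omega : ¬((u : ℕ) < (u : ℕ))), if_pos rfl]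
      exact helmert_off_aux _ _ _ _ _ _ _ _ hφt'.ne' hφu'.ne'
        (hσne (t : ℕ) htT) (hσne (u : ℕ) huT)
  constructor
  · -- Π f = 0
    funext t
    have htT : (t : ℕ) < T := by have := t.isLt; omega
    have hφt : 0 < φ (t : ℕ) := hφpos _ htT
    have hφt' : 0 < φ ((t : ℕ) + 1) := by
      apply hφpos; have := t.isLt; omega
    show ∑ s : Fin T, Pmat t s * f (s : ℕ) = 0
    simp only [hPmat]
    rw [Fin.sum_univ_eq_sum_range (fun s =>
      (if s < (t : ℕ) then 0
        else if s = (t : ℕ) then Real.sqrt (φ ((t : ℕ) + 1) / φ (t : ℕ)) / σ (t : ℕ)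
        else -(f (t : ℕ)) * f s * Real.sqrt (φ ((t : ℕ) + 1) / φ (t : ℕ)) /
          (φ ((t : ℕ) + 1) * σ (t : ℕ) * (σ s) ^ 2)) * f s) T]
    rw [Finset.range_eq_Ico, ← Finset.sum_Ico_consecutive _ (Nat.zero_le (t : ℕ)) htT.le,
      Finset.sum_eq_sum_Ico_succ_bot htT]
    set r := Real.sqrt (φ ((t : ℕ) + 1) / φ (t : ℕ)) with hr
    have hzero : ∑ s ∈ Finset.Ico 0 (t : ℕ),
        (if s < (t : ℕ) then 0
          else if s = (t : ℕ) then r / σ (t : ℕ)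
          else -(f (t : ℕ)) * f s * r / (φ ((t : ℕ) + 1) * σ (t : ℕ) * (σ s) ^ 2)) * f s = 0 := by
      refine Finset.sum_eq_zero fun s hs => ?_
      have hs' : s < (t : ℕ) := (Finset.mem_Ico.mp hs).2
      rw [if_pos hs', zero_mul]
    rw [hzero, zero_add]
    have htail : ∑ s ∈ Finset.Ico ((t : ℕ) + 1) T,
        (if s < (t : ℕ) then 0
          else if s = (t : ℕ) then r / σ (t : ℕ)
          else -(f (t : ℕ)) * f s * r / (φ ((t : ℕ) + 1) * σ (t : ℕ) * (σ s) ^ 2)) * f s =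
        -(f (t : ℕ)) * r / (φ ((t : ℕ) + 1) * σ (t : ℕ)) * φ ((t : ℕ) + 1) := by
      rw [show ∀ c : ℝ, c * φ ((t : ℕ) + 1) =
          ∑ s ∈ Finset.Ico ((t : ℕ) + 1) T, c * (f s / σ s) ^ 2 from
        fun c => by rw [← Finset.mul_sum, hφtail]]
      refine Finset.sum_congr rfl fun s hs => ?_
      have h1 : (t : ℕ) + 1 ≤ s := (Finset.mem_Ico.mp hs).1
      have h2 : s < T := (Finset.mem_Ico.mp hs).2
      rw [if_neg (by omega), if_neg (by omega)]
      exact helmert_row_term_aux _ _ _ _ _ _ hφt'.ne' (hσne (t : ℕ) htT) (hσne s h2)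
    rw [htail, if_neg (by omega : ¬((t : ℕ) < (t : ℕ))), if_pos rfl]
    have hσt := hσne (t : ℕ) htT
    show r / σ (t : ℕ) * f (t : ℕ) +
      -(f (t : ℕ)) * r / (φ ((t : ℕ) + 1) * σ (t : ℕ)) * φ ((t : ℕ) + 1) = (0 : Fin (T-1) → ℝ) t
    have : (0 : Fin (T - 1) → ℝ) t = 0 := rfl
    rw [this]
    exact helmert_row_aux _ _ _ _ hφt'.ne' (hσne (t : ℕ) htT)
  · -- Π Σ Πᵀ = 1
    ext t u
    have hentry : (Pmat * Matrix.diagonal (fun s : Fin T => (σ (s : ℕ)) ^ 2) * Pmat.transpose) t u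
        = ∑ s : Fin T, Pmat t s * (σ (s : ℕ)) ^ 2 * Pmat u s := by
      rw [Matrix.mul_apply]
      simp only [Matrix.mul_diagonal, Matrix.transpose_apply]
    rw [hentry, Matrix.one_apply]
    rcases le_or_gt (t : ℕ) (u : ℕ) with h | h
    · exact key t u h
    · have hcomm : ∑ s : Fin T, Pmat t s * (σ (s : ℕ)) ^ 2 * Pmat u s =
          ∑ s : Fin T, Pmat u s * (σ (s : ℕ)) ^ 2 * Pmat t s := by
        refine Finset.sum_congr rfl fun s _ => by ring
      rw [hcomm, key u t h.le]
      have : t ≠ u := fun hh => by rw [hh] at h; omega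
      simp [this, Ne.symm this]
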